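/- Let φ be ρ-weakly convex on closed convex X with λ < 1/ρ, and assume: (a) the global quadratic growth dist²(x, X*) ≤ κ_QG[φ(x) − φ*] for all x ∈ X; and (b) φ({Prox}_{λ,φ}(x)) − φ* + (1/(2λ))‖x − Prox_{λ,φ}(x)‖² = φ_λ(x) − φ*. Then dist²(x, X̄) ≤ 2·max{κ_QG, 2λ}·[φ_λ(x) − φ*] for all x ∈ X, where X̄ ⊇ X* is the set of critical points. -/

import Mathlib

open scoped RealInnerProductSpace

abbrev E (d : ℕ) := EuclideanSpace ℝ (Fin d)

/-- quadratic growth of φ transfers to the Moreau envelope with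
respect to the critical set X̄. -/
theorem QG_transfers_to_envelope {d : ℕ} (ρ lam κ : ℝ)
    (hρ : 0 ≤ ρ) (hlam : 0 < lam) (hlamρ : lam * ρ < 1) (hκ : 0 < κ)
    (X : Set (E d)) (hXcl : IsClosed X) (hXcv : Convex ℝ X)
    (φ : E d → ℝ)
    (hw : ConvexOn ℝ X (fun z => φ z + ρ / 2 * ‖z‖ ^ 2))
    (Xstar Xbar : Set (E d)) (hsub : Xstar ⊆ Xbar) (hne : Xstar.Nonempty)
    (hXstar : Xstar = {x ∈ X | ∀ y ∈ X, φ x ≤ φ y})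
    (φstar : ℝ) (hφstar : ∀ x ∈ Xstar, φ x = φstar)
    (hQG : ∀ x ∈ X, (Metric.infDist x Xstar) ^ 2 ≤ κ * (φ x - φstar))
    (p : E d → E d) (hpX : ∀ x, p x ∈ X)
    (hpmin : ∀ x : E d, ∀ y ∈ X,
      φ (p x) + ‖p x - x‖ ^ 2 / (2 * lam) ≤ φ y + ‖y - x‖ ^ 2 / (2 * lam))
    (φl : E d → ℝ)
    (hb : ∀ x : E d, φ (p x) - φstar + ‖x - p x‖ ^ 2 / (2 * lam) = φl x - φstar) :
    ∀ x ∈ X, (Metric.infDist x Xbar) ^ 2 ≤ 2 * max κ (2 * lam) * (φl x - φstar) := by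
  intro x hx
  set a := Metric.infDist x Xbar with ha
  set b := ‖x - p x‖ with hbdef
  set c := Metric.infDist (p x) Xstar with hc
  have hb0 : (0:ℝ) ≤ b := norm_nonneg _
  have hc0 : (0:ℝ) ≤ c := Metric.infDist_nonneg
  have habc : a ≤ b + c := by
    have h1 : a ≤ Metric.infDist (p x) Xbar + dist x (p x) :=
      Metric.infDist_le_infDist_add_dist
    have h2 : Metric.infDist (p x) Xbar ≤ c :=
      Metric.infDist_le_infDist_of_subset hsub hne
    have h3 : dist x (p x) = b := by rw [dist_eq_norm]
    linarith
  have hQGp := hQG (p x) (hpX x)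
  have ht0 : 0 ≤ φ (p x) - φstar := by
    nlinarith [sq_nonneg c]
  have hbx := hb x
  have hM1 : κ ≤ max κ (2 * lam) := le_max_left _ _
  have hM2 : 2 * lam ≤ max κ (2 * lam) := le_max_right _ _
  have hq : 0 ≤ b ^ 2 / (2 * lam) := by positivity
  have ha2 : a ^ 2 ≤ 2 * b ^ 2 + 2 * c ^ 2 := by
    nlinarith [sq_nonneg (b - c), Metric.infDist_nonneg (x := x) (s := Xbar)]
  have key : 2 * b ^ 2 = 2 * (2 * lam) * (b ^ 2 / (2 * lam)) := by
    field_simp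
  nlinarith [mul_le_mul_of_nonneg_right hM1 ht0, mul_le_mul_of_nonneg_right hM2 hq]
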